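/- For every ε ∈ (0, 1/2) there exists n₀ ∈ ℕ such that for all n ≥ n₀ the following two assertions hold: (a) for every randomized strategy μ on deterministic strategies q : List {0, …, n} → {0,1}^n there exists z ∈ {0,1}^n with E_{q∼μ}[τ(q, LO_z, {z})] ≥ (1/2 − ε)·n; and (b) there exists a randomized strategy μ such that for every z ∈ {0,1}^n, E_{q∼μ}[τ(q, LO_z, {z})] ≤ (1/2 + ε)·n. -/

import Mathlib

open scoped ENNReal

namespace BBC

variable {S V : Type*}

/-- The history of observed objective values after `t` queries:
`hist q f t = [f x₁, …, f x_t]`, where `x₁ = q []` and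
`x_{t+1} = q [f x₁, …, f x_t]`. -/
def hist (q : List V → S) (f : S → V) : ℕ → List V
  | 0 => []
  | t + 1 => hist q f t ++ [f (q (hist q f t))]

/-- `queryPt q f t` is the `(t+1)`-st queried search point `x_{t+1}`. -/
def queryPt (q : List V → S) (f : S → V) (t : ℕ) : S := q (hist q f t)

/-- The hitting time of a deterministic strategy `q` on objective `f` with
target set `M`: the least `t ≥ 1` with `x_t ∈ M`, valued in `ℕ∞`
(and `⊤` if no query ever hits `M`). -/
noncomputable def hitTime (q : List V → S) (f : S → V) (M : Set S) : ℕ∞ :=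
  sInf ((fun k : ℕ => (k : ℕ∞) + 1) '' {k | queryPt q f k ∈ M})

/-- The expected hitting time of a randomized strategy `μ` (a probability mass
function on deterministic strategies) on `(f, M)`, valued in `[0,∞]`. -/
noncomputable def expHitTime (μ : PMF (List V → S)) (f : S → V) (M : Set S) : ℝ≥0∞ :=
  ∑' q, μ q * (hitTime q f M : ℝ≥0∞)

end BBC

/-- The LeadingOnes function `LO_z x`: the length of the maximal joint prefix of
`x` and `z` (0-indexed positions). -/
def LO {n : ℕ} (z x : Fin n → Bool) : ℕ :=
  ((Finset.range (n + 1)).filter fun i => ∀ j : Fin n, (j : ℕ) < i → x j = z j).sup id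

/-- `LO_z` with values in `{0,…,n}`. -/
def LOf {n : ℕ} (z x : Fin n → Bool) : Fin (n + 1) :=
  ⟨LO z x, Nat.lt_succ_of_le (Finset.sup_le fun i hi =>
    Nat.lt_succ_iff.mp (Finset.mem_range.mp (Finset.mem_filter.mp hi).1))⟩


namespace Stmt7Aux
variable {n : ℕ}

/-- the set of mismatch positions -/
def mset (z x : Fin n → Bool) : Finset (Fin n) := Finset.univ.filter fun j => x j ≠ z j

lemma mem_mset {z x : Fin n → Bool} {j : Fin n} : j ∈ mset z x ↔ x j ≠ z j := by
  simp [mset]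

/-- first mismatch, or n if none -/
noncomputable def fm (z x : Fin n → Bool) : ℕ :=
  if h : (mset z x).Nonempty then ((mset z x).min' h : ℕ) else n

lemma fm_le (z x : Fin n → Bool) : fm z x ≤ n := by
  unfold fm; split
  · exact le_of_lt (Fin.is_lt _)
  · exact le_rfl

lemma eq_of_lt_fm {z x : Fin n → Bool} {j : Fin n} (h : (j : ℕ) < fm z x) : x j = z j := by
  unfold fm at h
  by_contra hne
  have hj : j ∈ mset z x := mem_mset.mpr hne
  rw [dif_pos ⟨j, hj⟩] at h
  exact absurd (Finset.min'_le _ j hj) (by omega)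

lemma fm_le_of_ne {z x : Fin n → Bool} {j : Fin n} (h : x j ≠ z j) : fm z x ≤ (j : ℕ) := by
  have hj : j ∈ mset z x := mem_mset.mpr h
  unfold fm; rw [dif_pos ⟨j, hj⟩]
  exact Finset.min'_le _ j hj

lemma fm_lt_n {z x : Fin n → Bool} (h : fm z x < n) :
    ∃ j : Fin n, (j : ℕ) = fm z x ∧ x j ≠ z j := by
  by_cases hne : (mset z x).Nonempty
  · refine ⟨(mset z x).min' hne, ?_, mem_mset.mp ((mset z x).min'_mem hne)⟩
    unfold fm; rw [dif_pos hne]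
  · exfalso; unfold fm at h; rw [dif_neg hne] at h; omega

lemma fm_eq_n_iff {z x : Fin n → Bool} : fm z x = n ↔ x = z := by
  constructor
  · intro h
    funext j
    by_contra hne
    have := fm_le_of_ne hne
    have := j.is_lt
    omega
  · intro h; subst h
    unfold fm
    rw [dif_neg]
    simp only [Finset.not_nonempty_iff_eq_empty, mset]
    ext j; simp

lemma LO_eq_fm (z x : Fin n → Bool) : LO z x = fm z x := by
  apply le_antisymm
  · apply Finset.sup_le
    intro i hi
    rw [Finset.mem_filter, Finset.mem_range] at hi
    obtain ⟨hi1, hi2⟩ := hi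
    by_contra hlt
    push_neg at hlt
    simp only [id_eq] at hlt
    have hfmn : fm z x < n := lt_of_lt_of_le (lt_of_lt_of_le hlt (Nat.lt_succ_iff.mp hi1)) le_rfl
    obtain ⟨j, hj1, hj2⟩ := fm_lt_n hfmn
    exact hj2 (hi2 _ (by omega))
  · have hmem : fm z x ∈ (Finset.range (n + 1)).filter
        fun i => ∀ j : Fin n, (j : ℕ) < i → x j = z j := by
      rw [Finset.mem_filter, Finset.mem_range]
      exact ⟨Nat.lt_succ_of_le (fm_le z x), fun j hj => eq_of_lt_fm hj⟩
    exact Finset.le_sup (f := id) hmem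

lemma LOf_val (z x : Fin n → Bool) : ((LOf z x : Fin (n+1)) : ℕ) = fm z x := LO_eq_fm z x

lemma LOf_eq_last_iff {z x : Fin n → Bool} : ((LOf z x : Fin (n+1)) : ℕ) = n ↔ x = z := by
  rw [LOf_val]; exact fm_eq_n_iff


lemma bool_flip {a b : Bool} (h : a ≠ b) : (!a) = b := by
  cases a <;> cases b <;> simp_all

/-- the flip-first-mismatch strategy with initial guess (random tape) `r` -/
def flipQ (r : Fin n → Bool) (h : List (Fin (n+1))) : Fin n → Bool :=
  fun j => if (j : ℕ) ∈ h.map Fin.val then !(r j) else r j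

/-- sorted list of mismatch positions of the initial guess -/
def mlist (z r : Fin n → Bool) : List (Fin n) := (mset z r).sort (· ≤ ·)

lemma mem_mlist {z r : Fin n → Bool} {j : Fin n} : j ∈ mlist z r ↔ r j ≠ z j := by
  rw [mlist, Finset.mem_sort]; exact mem_mset

lemma mlist_sorted (z r : Fin n → Bool) : List.Pairwise (· < ·) (mlist z r) :=
  (Finset.sortedLT_sort _).pairwise

lemma mlist_nodup (z r : Fin n → Bool) : (mlist z r).Nodup := Finset.sort_nodup _ _

/-- the t-th query of the flip strategy -/
def flipped (z r : Fin n → Bool) (t : ℕ) : Fin n → Bool :=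
  fun j => if j ∈ (mlist z r).take t then !(r j) else r j

lemma getElem_mem_take {L : List (Fin n)} {k t : ℕ} (hk : k < L.length) (h : k < t) :
    L[k] ∈ L.take t := by
  rw [List.mem_iff_getElem]
  refine ⟨k, by rw [List.length_take]; omega, ?_⟩
  rw [List.getElem_take]

lemma get_not_mem_take {L : List (Fin n)} (hnd : L.Nodup) {t : ℕ} (h : t < L.length) :
    L[t] ∉ L.take t := by
  intro hmem
  rw [List.mem_iff_getElem] at hmem
  obtain ⟨k, hk, hkeq⟩ := hmem
  rw [List.length_take] at hk
  have hk' : k < t := lt_of_lt_of_le hk (min_le_left _ _)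
  rw [List.getElem_take] at hkeq
  have := (List.Nodup.getElem_inj_iff hnd).mp hkeq
  omega

lemma fm_flipped (z r : Fin n → Bool) (t : ℕ) :
    fm z (flipped z r t) =
      if h : t < (mlist z r).length then ((mlist z r)[t] : ℕ) else n := by
  set L := mlist z r with hL
  split
  · next h =>
    set jt := L[t] with hjt
    have hjtL : jt ∈ L := List.getElem_mem h
    have hjtD : r jt ≠ z jt := mem_mlist.mp hjtL
    have hjtnt : jt ∉ L.take t := get_not_mem_take (mlist_nodup z r) h
    have hx : flipped z r t jt = r jt := by rw [flipped, if_neg hjtnt]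
    have hfmle : fm z (flipped z r t) ≤ (jt : ℕ) := fm_le_of_ne (by rw [hx]; exact hjtD)
    refine le_antisymm hfmle ?_
    have hfmn : fm z (flipped z r t) < n := lt_of_le_of_lt hfmle jt.is_lt
    obtain ⟨j0, hj0v, hj0ne⟩ := fm_lt_n hfmn
    rw [← hj0v]
    -- show jt ≤ j0
    by_cases hmem : j0 ∈ L.take t
    · exfalso
      have : flipped z r t j0 = !(r j0) := by rw [flipped, if_pos hmem]
      have hj0L : j0 ∈ L := List.mem_of_mem_take hmem
      exact hj0ne (this.trans (bool_flip (mem_mlist.mp hj0L)))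
    · have : flipped z r t j0 = r j0 := by rw [flipped, if_neg hmem]
      have hj0L : j0 ∈ L := mem_mlist.mpr (by rw [← this]; exact hj0ne)
      rw [List.mem_iff_getElem] at hj0L
      obtain ⟨k, hk, hkeq⟩ := hj0L
      have hkt : t ≤ k := by
        by_contra hkt
        push_neg at hkt
        exact hmem (hkeq ▸ getElem_mem_take hk hkt)
      rcases eq_or_lt_of_le hkt with heq | hlt
      · subst heq
        exact le_of_eq (congrArg Fin.val (hjt.trans hkeq))
      · have hrel := (mlist_sorted z r).rel_get_of_lt
          (a := ⟨t, h⟩) (b := ⟨k, hk⟩) (by exact hlt)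
        simp only [List.get_eq_getElem] at hrel
        rw [hkeq] at hrel
        exact le_of_lt hrel
  · next h =>
    push_neg at h
    rw [fm_eq_n_iff]
    funext j
    rw [flipped, List.take_of_length_le h]
    by_cases hj : j ∈ L
    · rw [if_pos hj]; exact bool_flip (mem_mlist.mp hj)
    · rw [if_neg hj]
      by_contra hne
      exact hj (mem_mlist.mpr hne)


lemma flipQ_eq_flipped (z r : Fin n → Bool) (t : ℕ) (h : List (Fin (n+1)))
    (hh : h = ((mlist z r).take t).map Fin.castSucc ++
      List.replicate (t - (mlist z r).length) (Fin.last n)) :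
    flipQ r h = flipped z r t := by
  funext j
  rw [flipQ, flipped, hh]
  have hiff : ((j : ℕ) ∈ (((mlist z r).take t).map Fin.castSucc ++
      List.replicate (t - (mlist z r).length) (Fin.last n)).map Fin.val) ↔
      j ∈ (mlist z r).take t := by
    simp only [List.map_append, List.mem_append, List.map_map, List.mem_map,
      Function.comp_apply, List.map_replicate, List.mem_replicate]
    constructor
    · rintro (⟨a, ha, hav⟩ | ⟨-, hj⟩)
      · have : a = j := Fin.ext (by simpa [Fin.coe_castSucc] using hav)
        exact this ▸ ha
      · exact absurd hj (by have := j.is_lt; simp [Fin.val_last]; omega)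
    · intro hj
      exact Or.inl ⟨j, hj, by simp [Fin.coe_castSucc]⟩
  by_cases hc : j ∈ (mlist z r).take t
  · rw [if_pos (hiff.mpr hc), if_pos hc]
  · rw [if_neg (fun hmem => hc (hiff.mp hmem)), if_neg hc]

lemma LOf_flipped (z r : Fin n → Bool) (t : ℕ) :
    LOf z (flipped z r t) =
      if h : t < (mlist z r).length then Fin.castSucc ((mlist z r)[t]) else Fin.last n := by
  apply Fin.ext
  rw [LOf_val, fm_flipped]
  split <;> simp

lemma hist_flipQ (z r : Fin n → Bool) (t : ℕ) :
    BBC.hist (flipQ r) (LOf z) t =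
      ((mlist z r).take t).map Fin.castSucc ++
        List.replicate (t - (mlist z r).length) (Fin.last n) := by
  induction t with
  | zero => simp [BBC.hist]
  | succ t ih =>
    have hq : flipQ r (BBC.hist (flipQ r) (LOf z) t) = flipped z r t :=
      flipQ_eq_flipped z r t _ ih
    show BBC.hist (flipQ r) (LOf z) t ++ [LOf z (flipQ r (BBC.hist (flipQ r) (LOf z) t))] = _
    rw [hq, ih, LOf_flipped]
    by_cases h : t < (mlist z r).length
    · rw [dif_pos h]
      have htake : (mlist z r).take (t+1) = (mlist z r).take t ++ [(mlist z r)[t]] := by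
        rw [List.take_succ, List.getElem?_eq_getElem h]
        rfl
      have h1 : t + 1 - (mlist z r).length = 0 := by omega
      have h2 : t - (mlist z r).length = 0 := by omega
      rw [h1, h2, htake, List.map_append]
      simp
    · rw [dif_neg h]
      push_neg at h
      have htake : (mlist z r).take (t+1) = (mlist z r).take t := by
        rw [List.take_of_length_le h, List.take_of_length_le (by omega)]
      have h1 : t + 1 - (mlist z r).length = (t - (mlist z r).length) + 1 := by omega
      rw [htake, h1, List.replicate_succ']
      simp

lemma queryPt_flipQ (z r : Fin n → Bool) (t : ℕ) :
    BBC.queryPt (flipQ r) (LOf z) t = flipped z r t :=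
  flipQ_eq_flipped z r t _ (hist_flipQ z r t)

lemma flipped_eq_iff (z r : Fin n → Bool) (t : ℕ) :
    flipped z r t = z ↔ (mlist z r).length ≤ t := by
  constructor
  · intro h
    by_contra hlt
    push_neg at hlt
    have h2 := fm_flipped z r t
    rw [dif_pos hlt] at h2
    have h3 : fm z (flipped z r t) = n := fm_eq_n_iff.mpr h
    have := ((mlist z r)[t]).is_lt
    omega
  · intro h
    apply fm_eq_n_iff.mp
    rw [fm_flipped, dif_neg (by omega)]

lemma hitTime_flipQ (z r : Fin n → Bool) :
    BBC.hitTime (flipQ r) (LOf z) {z} = ((mset z r).card : ℕ∞) + 1 := by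
  have hm : (mlist z r).length = (mset z r).card := Finset.length_sort _
  apply le_antisymm
  · apply sInf_le
    refine ⟨(mset z r).card, ?_, rfl⟩
    simp only [Set.mem_setOf_eq, Set.mem_singleton_iff, queryPt_flipQ, flipped_eq_iff, hm]
    exact le_rfl
  · apply le_sInf
    rintro b ⟨k, hk, rfl⟩
    simp only [Set.mem_setOf_eq, Set.mem_singleton_iff, queryPt_flipQ,
      flipped_eq_iff, hm] at hk
    exact add_le_add_left (by exact_mod_cast hk) 1


lemma expHitTime_map {α S V : Type*} (p : PMF α) (f : α → (List V → S)) (fo : S → V)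
    (M : Set S) :
    BBC.expHitTime (PMF.map f p) fo M = ∑' a, p a * (BBC.hitTime (f a) fo M : ℝ≥0∞) := by
  letI : DecidableEq (List V → S) := Classical.decEq _
  unfold BBC.expHitTime
  have h1 : ∀ q : List V → S, (PMF.map f p) q * (BBC.hitTime q fo M : ℝ≥0∞) =
      ∑' a, (if q = f a then p a * (BBC.hitTime q fo M : ℝ≥0∞) else 0) := by
    intro q
    rw [PMF.map_apply, ← ENNReal.tsum_mul_right]
    congr 1; funext a; rw [ite_mul, zero_mul]
  rw [tsum_congr h1, ENNReal.tsum_comm]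
  apply tsum_congr
  intro a
  rw [tsum_eq_single (f a) (fun b hb => if_neg hb)]
  rw [if_pos rfl]

lemma sum_mset_card (z : Fin n → Bool) :
    2 * ∑ r : Fin n → Bool, (mset z r).card = n * 2 ^ n := by
  have h1 : ∀ r : Fin n → Bool, (mset z r).card = ∑ j : Fin n, if r j ≠ z j then 1 else 0 :=
    fun r => by rw [mset, Finset.card_filter]
  rw [Finset.sum_congr rfl (fun r _ => h1 r), Finset.sum_comm]
  have hcard : ∑ _r : Fin n → Bool, 1 = 2 ^ n := by
    rw [Finset.sum_const, Finset.card_univ, Fintype.card_fun]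
    simp [mul_comm]
  have h2 : ∀ j : Fin n, 2 * (∑ r : Fin n → Bool, if r j ≠ z j then 1 else 0) = 2 ^ n := by
    intro j
    have hinv : Function.Involutive (fun r : Fin n → Bool => Function.update r j (!(r j))) := by
      intro r; funext k
      by_cases hk : k = j
      · subst hk; simp
      · simp [Function.update_of_ne hk]
    have hcomp : (∑ r : Fin n → Bool, if r j = z j then 1 else 0) =
        ∑ r : Fin n → Bool, if r j ≠ z j then 1 else 0 := by
      rw [← Equiv.sum_comp (Function.Involutive.toPerm _ hinv) (fun r => if r j = z j then (1 : ℕ) else 0)]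
      apply Finset.sum_congr rfl
      intro r _
      have he : ((Function.Involutive.toPerm _ hinv) r) j = !(r j) := by
        show (Function.update r j (!(r j))) j = !(r j)
        simp
      rw [he]
      cases hr : r j <;> cases hz : z j <;> simp
    have hsum : (∑ r : Fin n → Bool, if r j ≠ z j then 1 else 0) +
        (∑ r : Fin n → Bool, if r j = z j then 1 else 0) = 2 ^ n := by
      rw [← Finset.sum_add_distrib, ← hcard]
      apply Finset.sum_congr rfl
      intro r _
      by_cases h : r j = z j <;> simp [h]
    rw [two_mul]
    nth_rewrite 2 [← hcomp]
    exact hsum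
  have hfin : ∑ j : Fin n, 2 * ∑ r : Fin n → Bool, (if r j ≠ z j then 1 else 0) =
      ∑ _j : Fin n, 2 ^ n := Finset.sum_congr rfl (fun j _ => h2 j)
  rw [Finset.mul_sum, hfin]
  simp [Finset.sum_const, Finset.card_univ]



lemma upper_bound {ε : ℝ} (hε : 0 < ε) (hεn : 1 ≤ ε * n) :
    ∃ μ : PMF (List (Fin (n + 1)) → (Fin n → Bool)), ∀ z : Fin n → Bool,
        BBC.expHitTime μ (LOf z) {z} ≤ ENNReal.ofReal ((1 / 2 + ε) * n) := by
  refine ⟨PMF.map flipQ (PMF.uniformOfFintype (Fin n → Bool)), fun z => ?_⟩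
  rw [expHitTime_map]
  have hcard : (Fintype.card (Fin n → Bool)) = 2 ^ n := by
    rw [Fintype.card_fun]; simp
  have hterm : ∀ r : Fin n → Bool, (PMF.uniformOfFintype (Fin n → Bool)) r *
      (BBC.hitTime (flipQ r) (LOf z) {z} : ℝ≥0∞) =
      (((2 ^ n : ℕ) : ℝ≥0∞))⁻¹ * (((mset z r).card + 1 : ℕ) : ℝ≥0∞) := by
    intro r
    rw [PMF.uniformOfFintype_apply, hcard, hitTime_flipQ]
    norm_cast
  rw [tsum_congr hterm, ENNReal.tsum_mul_left, tsum_fintype, ← Nat.cast_sum]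
  set Sn := ∑ r : Fin n → Bool, ((mset z r).card + 1) with hSn
  have hS2 : 2 * Sn = n * 2 ^ n + 2 * 2 ^ n := by
    rw [hSn, Finset.sum_add_distrib, Nat.mul_add, sum_mset_card z]
    congr 1
    rw [Finset.sum_const, Finset.card_univ, hcard]
    simp [mul_comm]
  rw [← ENNReal.div_eq_inv_mul]
  rw [ENNReal.div_le_iff (by positivity) (ENNReal.natCast_ne_top _)]
  rw [← ENNReal.ofReal_natCast Sn, ← ENNReal.ofReal_natCast (2 ^ n),
    ← ENNReal.ofReal_mul (by positivity)]
  apply ENNReal.ofReal_le_ofReal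
  have hS2R : 2 * (Sn : ℝ) = n * 2 ^ n + 2 * 2 ^ n := by exact_mod_cast hS2
  push_cast
  nlinarith [mul_nonneg (sub_nonneg.mpr hεn) (le_of_lt (pow_pos (zero_lt_two (α := ℝ)) n)),
    pow_pos (zero_lt_two (α := ℝ)) n]


lemma choose_le_two_pow (n m : ℕ) : (n + 1).choose m ≤ 2 ^ (n + 1) := by
  by_cases hm : m ≤ n + 1
  · rw [← Nat.sum_range_choose (n + 1)]
    exact Finset.single_le_sum (f := fun i => (n + 1).choose i) (fun i _ => Nat.zero_le _)
      (Finset.mem_range.mpr (by omega))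
  · rw [Nat.choose_eq_zero_of_lt (by omega)]
    positivity

set_option maxHeartbeats 1000000 in
lemma binom_tail {ε : ℝ} (hε : 0 < ε) (hε2 : ε < 1 / 2) :
    ∃ n₀ : ℕ, ∀ n : ℕ, n₀ ≤ n →
      ((∑ j ∈ Finset.range (⌊(1 / 2 - ε / 2) * n⌋₊ + 1), ((n + 1).choose j) : ℕ) : ℝ) ≤
        ε * 2 ^ n := by
  set ρ : ℝ := (1 / 2 - ε / 4) / (1 / 2 + ε / 4) with hρ
  have hρ0 : 0 < ρ := by apply div_pos <;> nlinarith
  have hρ1 : ρ < 1 := by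
    rw [hρ, div_lt_one (by nlinarith)]
    nlinarith
  have h1ρ : (0:ℝ) < 1 - ρ := by linarith
  obtain ⟨N, hN⟩ := exists_pow_lt_of_lt_one (x := ε * (1 - ρ) / 4) (by positivity) hρ1
  refine ⟨⌈4 * (N + 1) / ε⌉₊ + 1, fun n hn => ?_⟩
  set T := ⌊(1 / 2 - ε / 2) * n⌋₊ with hT
  set T' := ⌊(1 / 2 - ε / 4) * n⌋₊ with hT'
  have hnR : (4 * (N + 1) : ℝ) / ε ≤ n := by
    calc (4 * (N + 1) : ℝ) / ε ≤ ⌈4 * (N + 1) / ε⌉₊ := Nat.le_ceil _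
    _ ≤ n := by exact_mod_cast (by omega : ⌈4 * (N + 1) / ε⌉₊ ≤ n)
  have hεn : 4 * ((N : ℝ) + 1) ≤ ε * n := by
    rw [div_le_iff₀ hε] at hnR
    linarith
  have hn0 : (0:ℝ) < n := by
    have h1 : (1:ℕ) ≤ n := by omega
    exact_mod_cast h1
  have hTT' : T ≤ T' := Nat.floor_mono (by nlinarith)
  have hT'R : (T' : ℝ) ≤ (1 / 2 - ε / 4) * n := Nat.floor_le (by nlinarith)
  have hTR : (T : ℝ) ≤ (1 / 2 - ε / 2) * n := Nat.floor_le (by nlinarith)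
  have hT'Rlow : (1 / 2 - ε / 4) * n - 1 < (T' : ℝ) := by
    have := Nat.lt_floor_add_one ((1 / 2 - ε / 4) * n)
    linarith
  -- single-step ratio bound
  have h14 : (0:ℝ) < 1 / 2 - ε / 4 := by nlinarith
  have hden : (0:ℝ) < 1 / 2 + ε / 4 := by nlinarith
  have hstep : ∀ j : ℕ, j < T' → ((n + 1).choose j : ℝ) ≤ ρ * ((n + 1).choose (j + 1)) := by
    intro j hj
    have hjT : (j : ℝ) + 1 ≤ (T' : ℝ) := by exact_mod_cast Nat.succ_le_of_lt hj
    have ha1 : (j : ℝ) + 1 ≤ (1 / 2 - ε / 4) * n := le_trans hjT hT'R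
    have hsplit : (1 / 2 - ε / 4) * n + (1 / 2 + ε / 4) * n = n := by ring
    have hq4 : (0:ℝ) ≤ (1 / 2 + ε / 4) * n :=
      mul_nonneg (by linarith) (le_of_lt hn0)
    have hq5 : (0:ℝ) < (1 / 2 + ε / 4) * n := mul_pos hden hn0
    have hjn : (j : ℝ) < n := by linarith
    have hjnn : j ≤ n + 1 := by exact_mod_cast (by linarith : (j:ℝ) ≤ (n:ℝ) + 1)
    have h0 := Nat.choose_succ_right_eq (n + 1) j
    have h0R : ((n + 1).choose (j + 1) : ℝ) * ((j : ℝ) + 1) =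
        ((n + 1).choose j : ℝ) * (((n + 1 - j : ℕ)) : ℝ) := by
      exact_mod_cast congrArg (fun m : ℕ => (m : ℝ)) h0
    have hcast : (((n + 1 - j : ℕ)) : ℝ) = (n : ℝ) + 1 - j := by
      push_cast [Nat.cast_sub hjnn]
      ring
    rw [hcast] at h0R
    have ha2 : (1 / 2 + ε / 4) * n ≤ (n : ℝ) + 1 - j := by linarith
    have hkey : ((j : ℝ) + 1) * (1 / 2 + ε / 4) ≤ (1 / 2 - ε / 4) * ((n : ℝ) + 1 - j) := by
      calc ((j : ℝ) + 1) * (1 / 2 + ε / 4) ≤ ((1 / 2 - ε / 4) * n) * (1 / 2 + ε / 4) :=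
            mul_le_mul_of_nonneg_right ha1 (le_of_lt hden)
        _ = (1 / 2 - ε / 4) * ((1 / 2 + ε / 4) * n) := by ring
        _ ≤ (1 / 2 - ε / 4) * ((n : ℝ) + 1 - j) := mul_le_mul_of_nonneg_left ha2 (le_of_lt h14)
    have hCj0 : (0:ℝ) ≤ ((n + 1).choose j : ℝ) := by positivity
    have hj1pos : (0:ℝ) < (j : ℝ) + 1 := by positivity
    rw [hρ, div_mul_eq_mul_div, le_div_iff₀ hden]
    have hmul : (((n + 1).choose j : ℝ) * (1 / 2 + ε / 4)) * ((j : ℝ) + 1) ≤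
        ((1 / 2 - ε / 4) * ((n + 1).choose (j + 1) : ℝ)) * ((j : ℝ) + 1) := by
      calc (((n + 1).choose j : ℝ) * (1 / 2 + ε / 4)) * ((j : ℝ) + 1)
          = ((n + 1).choose j : ℝ) * (((j : ℝ) + 1) * (1 / 2 + ε / 4)) := by ring
        _ ≤ ((n + 1).choose j : ℝ) * ((1 / 2 - ε / 4) * ((n : ℝ) + 1 - j)) :=
            mul_le_mul_of_nonneg_left hkey hCj0
        _ = (1 / 2 - ε / 4) * (((n + 1).choose j : ℝ) * ((n : ℝ) + 1 - j)) := by ring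
        _ = (1 / 2 - ε / 4) * (((n + 1).choose (j + 1) : ℝ) * ((j : ℝ) + 1)) := by rw [← h0R]
        _ = ((1 / 2 - ε / 4) * ((n + 1).choose (j + 1) : ℝ)) * ((j : ℝ) + 1) := by ring
    exact le_of_mul_le_mul_right hmul hj1pos
  -- iterated ratio bound
  have hiter : ∀ d j : ℕ, j + d ≤ T' →
      ((n + 1).choose j : ℝ) ≤ ρ ^ d * ((n + 1).choose (j + d)) := by
    intro d
    induction d with
    | zero => intro j _; simp
    | succ d ih =>
      intro j hjd
      calc ((n + 1).choose j : ℝ) ≤ ρ * ((n + 1).choose (j + 1)) := hstep j (by omega)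
        _ ≤ ρ * (ρ ^ d * ((n + 1).choose (j + 1 + d))) :=
            mul_le_mul_of_nonneg_left (ih (j + 1) (by omega)) (le_of_lt hρ0)
        _ = ρ ^ (d + 1) * ((n + 1).choose (j + (d + 1))) := by
            rw [show j + 1 + d = j + (d + 1) by omega]; ring
  -- each term bounded
  have hterm : ∀ j : ℕ, j ≤ T →
      ((n + 1).choose j : ℝ) ≤ ρ ^ (T' - T) * ρ ^ (T - j) * 2 ^ (n + 1) := by
    intro j hj
    have h1 : ((n + 1).choose j : ℝ) ≤ ρ ^ (T' - j) * ((n + 1).choose (j + (T' - j))) :=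
      hiter (T' - j) j (by omega)
    have h2 : ((n + 1).choose (j + (T' - j)) : ℝ) ≤ 2 ^ (n + 1) := by
      exact_mod_cast choose_le_two_pow n (j + (T' - j))
    calc ((n + 1).choose j : ℝ) ≤ ρ ^ (T' - j) * ((n + 1).choose (j + (T' - j))) := h1
      _ ≤ ρ ^ (T' - j) * 2 ^ (n + 1) := mul_le_mul_of_nonneg_left h2 (by positivity)
      _ = ρ ^ (T' - T) * ρ ^ (T - j) * 2 ^ (n + 1) := by
          rw [← pow_add]
          congr 2
          omega
  -- geometric sum bound
  have hgeom : ∑ i ∈ Finset.range (T + 1), ρ ^ i ≤ (1 - ρ)⁻¹ := by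
    rw [geom_sum_eq (ne_of_lt hρ1) (T + 1)]
    have he : (ρ ^ (T + 1) - 1) / (ρ - 1) = (1 - ρ ^ (T + 1)) / (1 - ρ) := by
      rw [div_eq_div_iff (by linarith) (by linarith)]
      ring
    rw [he, div_le_iff₀ h1ρ, inv_mul_cancel₀ (ne_of_gt h1ρ)]
    nlinarith [pow_nonneg (le_of_lt hρ0) (T + 1)]
  -- sum bound
  have hsum : ((∑ j ∈ Finset.range (T + 1), ((n + 1).choose j) : ℕ) : ℝ) ≤
      ρ ^ (T' - T) * (1 - ρ)⁻¹ * 2 ^ (n + 1) := by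
    push_cast
    calc ∑ j ∈ Finset.range (T + 1), ((n + 1).choose j : ℝ)
        ≤ ∑ j ∈ Finset.range (T + 1), ρ ^ (T' - T) * ρ ^ (T - j) * 2 ^ (n + 1) :=
          Finset.sum_le_sum (fun j hj => hterm j (by
            have := Finset.mem_range.mp hj; omega))
      _ = ρ ^ (T' - T) * (∑ j ∈ Finset.range (T + 1), ρ ^ (T - j)) * 2 ^ (n + 1) := by
          rw [Finset.mul_sum, Finset.sum_mul]
      _ ≤ ρ ^ (T' - T) * (1 - ρ)⁻¹ * 2 ^ (n + 1) := by
          have hre : ∑ j ∈ Finset.range (T + 1), ρ ^ (T - j) =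
              ∑ i ∈ Finset.range (T + 1), ρ ^ i := by
            have h0 := Finset.sum_range_reflect (fun i => ρ ^ i) (T + 1)
            simpa using h0
          apply mul_le_mul_of_nonneg_right _ (by positivity)
          rw [hre]
          exact mul_le_mul_of_nonneg_left hgeom (by positivity)
  -- T' - T ≥ N
  have hTTN : N ≤ T' - T := by
    have h2 : ((T' - T : ℕ) : ℝ) = (T' : ℝ) - T := Nat.cast_sub hTT'
    have h1 : (N : ℝ) ≤ ((T' - T : ℕ) : ℝ) := by
      rw [h2]
      nlinarith
    exact_mod_cast h1
  have hρpow : ρ ^ (T' - T) ≤ ρ ^ N := pow_le_pow_of_le_one (le_of_lt hρ0) (le_of_lt hρ1) hTTN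
  calc ((∑ j ∈ Finset.range (T + 1), ((n + 1).choose j) : ℕ) : ℝ)
      ≤ ρ ^ (T' - T) * (1 - ρ)⁻¹ * 2 ^ (n + 1) := hsum
    _ ≤ ρ ^ N * (1 - ρ)⁻¹ * 2 ^ (n + 1) :=
        mul_le_mul_of_nonneg_right (mul_le_mul_of_nonneg_right hρpow (by positivity))
          (by positivity)
    _ ≤ (ε * (1 - ρ) / 4) * (1 - ρ)⁻¹ * 2 ^ (n + 1) :=
        mul_le_mul_of_nonneg_right (mul_le_mul_of_nonneg_right (le_of_lt hN) (by positivity))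
          (by positivity)
    _ = ε / 4 * 2 ^ (n + 1) := by
        field_simp
    _ ≤ ε * 2 ^ n := by
        rw [pow_succ]
        nlinarith [pow_pos (zero_lt_two (α := ℝ)) n]


-- ############ LOWER BOUND ############
section Lower
variable (q : List (Fin (n+1)) → (Fin n → Bool))

/-- the `(t+1)`-st response value (as a natural number) in the run on `LO_z` -/
noncomputable def resp (z : Fin n → Bool) (t : ℕ) : ℕ :=
  fm z (BBC.queryPt q (LOf z) t)

/-- the number of initial bits of `z` known after `t` queries -/
noncomputable def know (z : Fin n → Bool) : ℕ → ℕ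
  | 0 => 0
  | t + 1 => max (know z t) (resp q z t + 1)

lemma know_mono (z : Fin n → Bool) {s t : ℕ} (h : s ≤ t) : know q z s ≤ know q z t := by
  induction t with
  | zero => simpa [Nat.le_zero.mp h]
  | succ t ih =>
    rcases Nat.lt_succ_iff_lt_or_eq.mp (Nat.lt_succ_of_le h) with h' | h'
    · exact le_trans (ih (by omega)) (le_max_left _ _)
    · subst h'; exact le_rfl

lemma resp_le (z : Fin n → Bool) (t : ℕ) : resp q z t ≤ n := fm_le _ _

lemma know_le_n {z : Fin n → Bool} {t : ℕ} (h : ∀ s < t, resp q z s < n) :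
    know q z t ≤ n := by
  induction t with
  | zero => simp [know]
  | succ t ih =>
    rw [know]
    exact max_le (ih (fun s hs => h s (by omega))) (h t (by omega))

lemma hist_congr {z z' : Fin n → Bool} {t : ℕ}
    (h : ∀ s < t, resp q z s = resp q z' s) :
    BBC.hist q (LOf z) t = BBC.hist q (LOf z') t := by
  induction t with
  | zero => rfl
  | succ t ih =>
    have hh := ih (fun s hs => h s (by omega))
    show BBC.hist q (LOf z) t ++ [LOf z (q (BBC.hist q (LOf z) t))] =
      BBC.hist q (LOf z') t ++ [LOf z' (q (BBC.hist q (LOf z') t))]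
    rw [hh]
    have hv : (LOf z (q (BBC.hist q (LOf z') t)) : ℕ) =
        (LOf z' (q (BBC.hist q (LOf z') t)) : ℕ) := by
      rw [LOf_val, LOf_val]
      have h1 : fm z (q (BBC.hist q (LOf z') t)) = resp q z t := by
        rw [← hh]; rfl
      have h2 : fm z' (q (BBC.hist q (LOf z') t)) = resp q z' t := rfl
      rw [h1, h2]
      exact h t (by omega)
    rw [Fin.ext hv]

lemma queryPt_congr {z z' : Fin n → Bool} {t : ℕ}
    (h : ∀ s < t, resp q z s = resp q z' s) :
    BBC.queryPt q (LOf z) t = BBC.queryPt q (LOf z') t :=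
  congrArg q (hist_congr q h)

lemma know_congr {z z' : Fin n → Bool} {t : ℕ}
    (h : ∀ s < t, resp q z s = resp q z' s) :
    know q z t = know q z' t := by
  induction t with
  | zero => rfl
  | succ t ih =>
    show max _ _ = max _ _
    rw [ih (fun s hs => h s (by omega)), h t (by omega)]

lemma pattern {z z' : Fin n → Bool} {t : ℕ}
    (hre : ∀ s < t, resp q z s = resp q z' s)
    (hlt : ∀ s < t, resp q z s < n) :
    ∀ j : Fin n, (j : ℕ) < know q z t → z j = z' j := by
  induction t with
  | zero => intro j hj; simp [know] at hj
  | succ t ih =>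
    intro j hj
    have hre' : ∀ s < t, resp q z s = resp q z' s := fun s hs => hre s (by omega)
    have hlt' : ∀ s < t, resp q z s < n := fun s hs => hlt s (by omega)
    rcases lt_or_ge (j : ℕ) (know q z t) with hc | hc
    · exact ih hre' hlt' j hc
    · have hjr : (j : ℕ) ≤ resp q z t := by
        have : (j : ℕ) < max (know q z t) (resp q z t + 1) := hj
        omega
      have hx : BBC.queryPt q (LOf z) t = BBC.queryPt q (LOf z') t := queryPt_congr q hre'
      have hr' : resp q z' t = resp q z t := (hre t (by omega)).symm
      rcases lt_or_eq_of_le hjr with hlt2 | heq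
      · have e1 : BBC.queryPt q (LOf z) t j = z j := eq_of_lt_fm hlt2
        have e2' : (j : ℕ) < resp q z' t := by rw [hr']; exact hlt2
        have e2 : BBC.queryPt q (LOf z') t j = z' j := eq_of_lt_fm e2' 
        rw [← e1, ← e2, hx]
      · have hn : resp q z t < n := hlt t (by omega)
        obtain ⟨j0, hj0v, hj0ne⟩ := fm_lt_n (z := z) (x := BBC.queryPt q (LOf z) t) hn
        obtain ⟨j1, hj1v, hj1ne⟩ := fm_lt_n (z := z') (x := BBC.queryPt q (LOf z') t)
          (by rw [show fm z' (BBC.queryPt q (LOf z') t) = resp q z' t from rfl, hr']; exact hn)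
        have hj0 : j0 = j := Fin.ext (by rw [hj0v]; exact heq.symm ▸ rfl)
        have hj1 : j1 = j := Fin.ext (by
          rw [hj1v, show fm z' (BBC.queryPt q (LOf z') t) = resp q z' t from rfl, hr', ← heq])
        rw [hj0] at hj0ne
        rw [hj1] at hj1ne
        have e1 : (!(BBC.queryPt q (LOf z) t j)) = z j := bool_flip hj0ne
        have e2 : (!(BBC.queryPt q (LOf z') t j)) = z' j := bool_flip hj1ne
        rw [← e1, ← e2, hx]

/-- is step `t` a "gain" (probing) step? -/
noncomputable def gb (z : Fin n → Bool) (t : ℕ) : Bool :=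
  decide (know q z t ≤ resp q z t)

/-- the list of responses at gain steps among the first `T` steps -/
noncomputable def gl (z : Fin n → Bool) (T : ℕ) : List ℕ :=
  ((List.range T).filter (gb q z)).map (resp q z)

lemma gl_split {z : Fin n → Bool} {t T : ℕ} (h : t < T) (hg : know q z t ≤ resp q z t) :
    ∃ l₂ : List ℕ, gl q z T =
      ((List.range t).filter (gb q z)).map (resp q z) ++ resp q z t :: l₂ := by
  refine ⟨((List.range (T - (t+1))).map (fun x => (t+1) + x)).filter (gb q z)
      |>.map (resp q z), ?_⟩
  have hrange : List.range T = (List.range t ++ [t]) ++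
      (List.range (T - (t+1))).map (fun x => (t+1) + x) := by
    rw [← List.range_succ, ← List.range_add]
    congr 1
    omega
  rw [gl, hrange, List.filter_append, List.filter_append, List.map_append, List.map_append]
  have hft : List.filter (gb q z) [t] = [t] := by
    simp [List.filter, gb, hg]
  rw [hft]
  simp

lemma gl_prefix_congr {z z' : Fin n → Bool} {t : ℕ}
    (hre : ∀ s < t, resp q z s = resp q z' s) :
    ((List.range t).filter (gb q z)).map (resp q z) =
      ((List.range t).filter (gb q z')).map (resp q z') := by
  have hf : (List.range t).filter (gb q z) = (List.range t).filter (gb q z') := by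
    apply List.filter_congr
    intro s hs
    rw [List.mem_range] at hs
    rw [gb, gb, know_congr q (fun u hu => hre u (by omega)), hre s hs]
  rw [hf]
  apply List.map_congr_left
  intro s hs
  rw [List.mem_filter, List.mem_range] at hs
  exact hre s hs.1

lemma resp_step {z z' : Fin n → Bool} {t T : ℕ} (htT : t < T)
    (hre : ∀ s < t, resp q z s = resp q z' s)
    (hlt : ∀ s < t, resp q z s < n)
    (hgl : gl q z T = gl q z' T) :
    resp q z t = resp q z' t := by
  have hlt' : ∀ s < t, resp q z' s < n := fun s hs => (hre s hs) ▸ hlt s hs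
  have hx : BBC.queryPt q (LOf z) t = BBC.queryPt q (LOf z') t := queryPt_congr q hre
  have hkn : know q z t = know q z' t := know_congr q hre
  have hpat : ∀ j : Fin n, (j : ℕ) < know q z t → z j = z' j := pattern q hre hlt
  by_cases hA : ∃ j : Fin n, (j : ℕ) < know q z t ∧ BBC.queryPt q (LOf z) t j ≠ z j
  · obtain ⟨j, hjk, hjne⟩ := hA
    have hjne' : BBC.queryPt q (LOf z') t j ≠ z' j := by
      rw [← hx, ← hpat j hjk]; exact hjne
    -- resp q z t ≤ j < n, so there is a mismatch witness for z, and symmetrically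
    have h1 : resp q z t ≤ (j : ℕ) := fm_le_of_ne hjne
    have h1' : resp q z' t ≤ (j : ℕ) := fm_le_of_ne hjne'
    obtain ⟨j0, hj0v, hj0ne⟩ := fm_lt_n (z := z) (x := BBC.queryPt q (LOf z) t)
      (lt_of_le_of_lt h1 j.is_lt)
    obtain ⟨j1, hj1v, hj1ne⟩ := fm_lt_n (z := z') (x := BBC.queryPt q (LOf z') t)
      (lt_of_le_of_lt h1' j.is_lt)
    have hj0v' : (j0 : ℕ) = resp q z t := hj0v
    have hj1v' : (j1 : ℕ) = resp q z' t := hj1v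
    -- resp z' t ≤ j0
    have hj0k : (j0 : ℕ) < know q z t := by omega
    have hj0ne' : BBC.queryPt q (LOf z') t j0 ≠ z' j0 := by
      rw [← hx, ← hpat j0 hj0k]; exact hj0ne
    have h2 : resp q z' t ≤ resp q z t := by
      have h2' : resp q z' t ≤ (j0 : ℕ) := fm_le_of_ne hj0ne'
      omega
    have hj1k : (j1 : ℕ) < know q z t := by omega
    have hj1ne0 : BBC.queryPt q (LOf z) t j1 ≠ z j1 := by
      rw [hx, hpat j1 hj1k]; exact hj1ne
    have h3 : resp q z t ≤ resp q z' t := by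
      have h3' : resp q z t ≤ (j1 : ℕ) := fm_le_of_ne hj1ne0
      omega
    omega
  · push_neg at hA
    have hg : know q z t ≤ resp q z t := by
      by_contra hcon
      push_neg at hcon
      have hn : resp q z t < n := lt_of_lt_of_le hcon (know_le_n q hlt)
      obtain ⟨j0, hv, hne⟩ := fm_lt_n (z := z) (x := BBC.queryPt q (LOf z) t) hn
      have hv' : (j0 : ℕ) = resp q z t := hv
      exact hne (hA j0 (by omega))
    have hg' : know q z' t ≤ resp q z' t := by
      by_contra hcon
      push_neg at hcon
      have hn : resp q z' t < n := lt_of_lt_of_le hcon (know_le_n q hlt')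
      obtain ⟨j0, hv, hne⟩ := fm_lt_n (z := z') (x := BBC.queryPt q (LOf z') t) hn
      have hv' : (j0 : ℕ) = resp q z' t := hv
      have hj0k : (j0 : ℕ) < know q z t := by rw [hkn]; omega
      have : BBC.queryPt q (LOf z) t j0 ≠ z j0 := by
        rw [hx, hpat j0 hj0k]; exact hne
      exact this (hA j0 hj0k)
    obtain ⟨l₂, he⟩ := gl_split q htT hg
    obtain ⟨l₂', he'⟩ := gl_split q htT hg'
    rw [he, he', gl_prefix_congr q hre] at hgl
    have := (List.append_inj hgl (by rw [← gl_prefix_congr q hre])).2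
    exact List.head_eq_of_cons_eq this

/-- main injectivity: within the first `T` steps, the gain list determines `z` -/
lemma gl_inj {z z' : Fin n → Bool} {T : ℕ}
    (hz : ∃ k < T, BBC.queryPt q (LOf z) k = z)
    (hz' : ∃ k < T, BBC.queryPt q (LOf z') k = z')
    (hgl : gl q z T = gl q z' T) : z = z' := by
  classical
  -- helper, assuming find ≤ find
  suffices H : ∀ z z' : Fin n → Bool,
      ∀ (hz : ∃ k < T, BBC.queryPt q (LOf z) k = z)
        (hz' : ∃ k < T, BBC.queryPt q (LOf z') k = z'),
      gl q z T = gl q z' T →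
      Nat.find (⟨hz.choose, hz.choose_spec.2⟩ : ∃ k, BBC.queryPt q (LOf z) k = z) ≤
        Nat.find (⟨hz'.choose, hz'.choose_spec.2⟩ : ∃ k, BBC.queryPt q (LOf z') k = z') →
      z = z' by
    rcases le_total
        (Nat.find (⟨hz.choose, hz.choose_spec.2⟩ : ∃ k, BBC.queryPt q (LOf z) k = z))
        (Nat.find (⟨hz'.choose, hz'.choose_spec.2⟩ : ∃ k, BBC.queryPt q (LOf z') k = z'))
        with hle | hle
    · exact H z z' hz hz' hgl hle
    · exact (H z' z hz' hz hgl.symm hle).symm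
  clear hz hz' hgl z z'
  intro z z' hz hz' hgl hle
  set PZ : ∃ k, BBC.queryPt q (LOf z) k = z := ⟨hz.choose, hz.choose_spec.2⟩ with hPZ
  set PZ' : ∃ k, BBC.queryPt q (LOf z') k = z' := ⟨hz'.choose, hz'.choose_spec.2⟩ with hPZ'
  set a := Nat.find PZ with ha
  set a' := Nat.find PZ' with ha'
  have haspec : BBC.queryPt q (LOf z) a = z := Nat.find_spec PZ
  have haT : a < T := lt_of_le_of_lt (Nat.find_min' PZ hz.choose_spec.2) hz.choose_spec.1
  have hltz : ∀ s < a, resp q z s < n := by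
    intro s hs
    rcases lt_or_eq_of_le (resp_le q z s) with h | h
    · exact h
    · exfalso
      have : BBC.queryPt q (LOf z) s = z := fm_eq_n_iff.mp h
      exact absurd (Nat.find_min' PZ this) (by omega)
  have key : ∀ t, t ≤ a → ∀ s < t, resp q z s = resp q z' s := by
    intro t
    induction t with
    | zero => intro _ s hs; omega
    | succ t ih =>
      intro ht s hs
      rcases Nat.lt_succ_iff_lt_or_eq.mp hs with h | h
      · exact ih (by omega) s h
      · subst h
        exact resp_step q (by omega) (ih (by omega)) (fun u hu => hltz u (by omega)) hgl
  have hre_a : ∀ s < a, resp q z s = resp q z' s := key a le_rfl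
  rcases lt_or_eq_of_le hle with hlt | heqa
  · -- a < a' : contradiction
    exfalso
    have hstep : resp q z a = resp q z' a := resp_step q haT hre_a hltz hgl
    have hrn : resp q z a = n := fm_eq_n_iff.mpr haspec
    have h5 : resp q z' a = n := by rw [← hstep]; exact hrn
    have : BBC.queryPt q (LOf z') a = z' := fm_eq_n_iff.mp h5
    exact absurd (Nat.find_min' PZ' this) (by omega)
  · -- a = a'
    have hq : BBC.queryPt q (LOf z) a = BBC.queryPt q (LOf z') a := queryPt_congr q hre_a
    have haspec' : BBC.queryPt q (LOf z') a' = z' := Nat.find_spec PZ'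
    rw [← haspec, hq, heqa, haspec']

lemma gl_sorted (z : Fin n → Bool) (T : ℕ) : List.Pairwise (· < ·) (gl q z T) := by
  rw [gl, List.pairwise_map]
  have hp : ((List.range T).filter (gb q z)).Pairwise (· < ·) :=
    List.Pairwise.filter _ (List.pairwise_lt_range (n := T))
  apply hp.imp_of_mem
  intro a b ha hb hab
  rw [List.mem_filter] at ha hb
  have hga : know q z a ≤ resp q z a := of_decide_eq_true ha.2
  have hgb : know q z b ≤ resp q z b := of_decide_eq_true hb.2
  have h1 : resp q z a + 1 ≤ know q z (a + 1) := le_max_right _ _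
  have h2 : know q z (a + 1) ≤ know q z b := know_mono q z hab
  omega

lemma gl_mem_le {z : Fin n → Bool} {T v : ℕ} (h : v ∈ gl q z T) : v ≤ n := by
  rw [gl, List.mem_map] at h
  obtain ⟨t, _, rfl⟩ := h
  exact resp_le q z t

lemma gl_length_le (z : Fin n → Bool) (T : ℕ) : (gl q z T).length ≤ T := by
  rw [gl, List.length_map]
  calc ((List.range T).filter (gb q z)).length ≤ (List.range T).length :=
        List.length_filter_le _ _
    _ = T := List.length_range

lemma card_bad (T : ℕ) [DecidablePred fun z : Fin n → Bool => ∃ k < T, BBC.queryPt q (LOf z) k = z] :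
    (Finset.univ.filter fun z : Fin n → Bool => ∃ k < T, BBC.queryPt q (LOf z) k = z).card ≤
      ∑ j ∈ Finset.range (T + 1), (n + 1).choose j := by
  classical
  haveI : IsAntisymm ℕ (· < ·) := ⟨fun a b h1 h2 => absurd h2 (by omega)⟩
  set S := (Finset.range (T + 1)).biUnion
    (fun j => Finset.powersetCard j (Finset.range (n + 1))) with hS
  have hmaps : ∀ z ∈ (Finset.univ.filter fun z : Fin n → Bool =>
      ∃ k < T, BBC.queryPt q (LOf z) k = z), (gl q z T).toFinset ∈ S := by
    intro z _
    rw [hS, Finset.mem_biUnion]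
    refine ⟨(gl q z T).toFinset.card, ?_, ?_⟩
    · rw [Finset.mem_range]
      have := List.toFinset_card_le (gl q z T)
      have := gl_length_le q z T
      omega
    · rw [Finset.mem_powersetCard]
      refine ⟨?_, rfl⟩
      intro v hv
      rw [List.mem_toFinset] at hv
      rw [Finset.mem_range]
      have := gl_mem_le q hv
      omega
  have hinj : Set.InjOn (fun z => (gl q z T).toFinset)
      ↑(Finset.univ.filter fun z : Fin n → Bool => ∃ k < T, BBC.queryPt q (LOf z) k = z) := by
    intro z hz z' hz' heq
    rw [Finset.coe_filter, Set.mem_setOf_eq] at hz hz'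
    have heq' : (gl q z T).toFinset = (gl q z' T).toFinset := heq
    have hnd : (gl q z T).Nodup := (gl_sorted q z T).imp (fun h => ne_of_lt h)
    have hnd' : (gl q z' T).Nodup := (gl_sorted q z' T).imp (fun h => ne_of_lt h)
    have hperm := List.perm_of_nodup_nodup_toFinset_eq hnd hnd' heq'
    exact gl_inj q hz.2 hz'.2
      (List.Perm.eq_of_pairwise (fun a b _ _ h1 h2 => absurd h2 (by omega)) (gl_sorted q z T) (gl_sorted q z' T) hperm)
  calc _ ≤ S.card := Finset.card_le_card_of_injOn _ hmaps hinj
    _ ≤ ∑ j ∈ Finset.range (T + 1), (Finset.powersetCard j (Finset.range (n + 1))).card :=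
        Finset.card_biUnion_le
    _ = ∑ j ∈ Finset.range (T + 1), (n + 1).choose j := by
        apply Finset.sum_congr rfl
        intro j _
        rw [Finset.card_powersetCard, Finset.card_range]

lemma hit_ge {z : Fin n → Bool} {T : ℕ}
    (h : ¬ ∃ k < T, BBC.queryPt q (LOf z) k = z) :
    ((T : ℕ∞) + 1) ≤ BBC.hitTime q (LOf z) {z} := by
  apply le_sInf
  rintro b ⟨k, hk, rfl⟩
  rw [Set.mem_setOf_eq, Set.mem_singleton_iff] at hk
  have hTk : T ≤ k := by
    by_contra hc
    push_neg at hc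
    exact h ⟨k, hc, hk⟩
  show ((T : ℕ∞) + 1) ≤ ((k : ℕ∞) + 1)
  exact_mod_cast Nat.succ_le_succ hTk

lemma sum_hit_lower (T : ℕ) :
    ((2 ^ n - ∑ j ∈ Finset.range (T + 1), (n + 1).choose j : ℕ) : ℝ≥0∞) * ((T : ℝ≥0∞) + 1) ≤
      ∑ z : Fin n → Bool, (BBC.hitTime q (LOf z) {z} : ℝ≥0∞) := by
  classical
  set Bad := Finset.univ.filter (fun z : Fin n → Bool => ∃ k < T, BBC.queryPt q (LOf z) k = z)
    with hB
  have hcard : 2 ^ n - (∑ j ∈ Finset.range (T + 1), (n + 1).choose j) ≤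
      (Finset.univ \ Bad).card := by
    rw [Finset.card_sdiff_of_subset (Finset.subset_univ _), Finset.card_univ, Fintype.card_fun]
    simp only [Fintype.card_fin, Fintype.card_bool]
    have hcb := card_bad q T
    rw [← hB] at hcb
    omega
  calc ((2 ^ n - ∑ j ∈ Finset.range (T + 1), (n + 1).choose j : ℕ) : ℝ≥0∞) * ((T : ℝ≥0∞) + 1)
      ≤ (((Finset.univ \ Bad).card : ℕ) : ℝ≥0∞) * ((T : ℝ≥0∞) + 1) :=
        mul_le_mul_left (by exact_mod_cast hcard) _
    _ = (Finset.univ \ Bad).card • ((T : ℝ≥0∞) + 1) := (nsmul_eq_mul _ _).symm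
    _ ≤ ∑ z ∈ Finset.univ \ Bad, (BBC.hitTime q (LOf z) {z} : ℝ≥0∞) := by
        apply Finset.card_nsmul_le_sum
        intro z hz
        rw [Finset.mem_sdiff, hB, Finset.mem_filter] at hz
        have hnb : ¬ ∃ k < T, BBC.queryPt q (LOf z) k = z := fun hc => hz.2 ⟨hz.1, hc⟩
        exact_mod_cast hit_ge q hnb
    _ ≤ ∑ z : Fin n → Bool, (BBC.hitTime q (LOf z) {z} : ℝ≥0∞) :=
        Finset.sum_le_sum_of_subset (Finset.sdiff_subset)

lemma lower_bound {ε : ℝ} {T : ℕ}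
    (hc : ENNReal.ofReal ((1 / 2 - ε) * n) * ((2 ^ n : ℕ) : ℝ≥0∞) ≤
      ((2 ^ n - ∑ j ∈ Finset.range (T + 1), (n + 1).choose j : ℕ) : ℝ≥0∞) * ((T : ℝ≥0∞) + 1)) :
    ∀ μ : PMF (List (Fin (n + 1)) → (Fin n → Bool)), ∃ z : Fin n → Bool,
      ENNReal.ofReal ((1 / 2 - ε) * n) ≤ BBC.expHitTime μ (LOf z) {z} := by
  intro μ
  obtain ⟨z₀, _, hz₀⟩ := Finset.exists_max_image Finset.univ
    (fun z : Fin n → Bool => BBC.expHitTime μ (LOf z) {z}) ⟨fun _ => false, Finset.mem_univ _⟩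
  refine ⟨z₀, ?_⟩
  have hexch : ∑ z : Fin n → Bool, BBC.expHitTime μ (LOf z) {z} =
      ∑' s, μ s * ∑ z : Fin n → Bool, (BBC.hitTime s (LOf z) {z} : ℝ≥0∞) := by
    unfold BBC.expHitTime
    rw [← tsum_fintype (L := SummationFilter.unconditional (Fin n → Bool)), ENNReal.tsum_comm]
    apply tsum_congr
    intro s
    rw [tsum_fintype, Finset.mul_sum]
  have h2 : ENNReal.ofReal ((1 / 2 - ε) * n) * ((2 ^ n : ℕ) : ℝ≥0∞) ≤
      ∑ z : Fin n → Bool, BBC.expHitTime μ (LOf z) {z} := by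
    rw [hexch]
    calc ENNReal.ofReal ((1 / 2 - ε) * n) * ((2 ^ n : ℕ) : ℝ≥0∞)
        ≤ ((2 ^ n - ∑ j ∈ Finset.range (T + 1), (n + 1).choose j : ℕ) : ℝ≥0∞) *
          ((T : ℝ≥0∞) + 1) := hc
      _ = (∑' s, μ s) * (((2 ^ n - ∑ j ∈ Finset.range (T + 1), (n + 1).choose j : ℕ) : ℝ≥0∞) *
          ((T : ℝ≥0∞) + 1)) := by rw [PMF.tsum_coe, one_mul]
      _ = ∑' s, μ s * (((2 ^ n - ∑ j ∈ Finset.range (T + 1), (n + 1).choose j : ℕ) : ℝ≥0∞) *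
          ((T : ℝ≥0∞) + 1)) := ENNReal.tsum_mul_right.symm
      _ ≤ ∑' s, μ s * ∑ z : Fin n → Bool, (BBC.hitTime s (LOf z) {z} : ℝ≥0∞) :=
          ENNReal.tsum_le_tsum (fun s => mul_le_mul_right (sum_hit_lower s T) _)
  have h3 : ∑ z : Fin n → Bool, BBC.expHitTime μ (LOf z) {z} ≤
      ((2 ^ n : ℕ) : ℝ≥0∞) * BBC.expHitTime μ (LOf z₀) {z₀} := by
    have := Finset.sum_le_card_nsmul Finset.univ
      (fun z : Fin n → Bool => BBC.expHitTime μ (LOf z) {z})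
      (BBC.expHitTime μ (LOf z₀) {z₀}) (fun z hz => hz₀ z hz)
    rwa [Finset.card_univ, Fintype.card_fun, Fintype.card_fin, Fintype.card_bool,
      nsmul_eq_mul] at this
  have h4 := le_trans h2 h3
  rw [mul_comm (ENNReal.ofReal ((1 / 2 - ε) * n)) _] at h4
  exact (ENNReal.mul_le_mul_iff_right (by positivity) (ENNReal.natCast_ne_top _)).mp h4

end Lower

end Stmt7Aux

/-- The unrestricted black-box complexity of `{LO_z | z}` is `n/2 ± o(n)`. -/
theorem stmt7 : ∀ ε : ℝ, 0 < ε → ε < 1 / 2 → ∃ n₀ : ℕ, ∀ n : ℕ, n₀ ≤ n →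
    (∀ μ : PMF (List (Fin (n + 1)) → (Fin n → Bool)), ∃ z : Fin n → Bool,
        ENNReal.ofReal ((1 / 2 - ε) * n) ≤ BBC.expHitTime μ (LOf z) {z}) ∧
    (∃ μ : PMF (List (Fin (n + 1)) → (Fin n → Bool)), ∀ z : Fin n → Bool,
        BBC.expHitTime μ (LOf z) {z} ≤ ENNReal.ofReal ((1 / 2 + ε) * n)) := by
  intro ε hε hε2
  obtain ⟨n₁, hn₁⟩ := Stmt7Aux.binom_tail hε hε2
  refine ⟨max n₁ (⌈1 / ε⌉₊ + 1), fun n hn => ?_⟩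
  have hn1 : n₁ ≤ n := le_trans (le_max_left _ _) hn
  have hn2 : ⌈1 / ε⌉₊ + 1 ≤ n := le_trans (le_max_right _ _) hn
  have hn0 : (0:ℝ) < n := by
    have h1 : (1:ℕ) ≤ n := by omega
    exact_mod_cast h1
  have hεn : 1 ≤ ε * n := by
    have h1 : (1 / ε : ℝ) ≤ n := by
      calc (1 / ε : ℝ) ≤ ⌈1 / ε⌉₊ := Nat.le_ceil _
      _ ≤ n := by exact_mod_cast (by omega : ⌈1 / ε⌉₊ ≤ n)
    rw [div_le_iff₀ hε] at h1
    nlinarith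
  constructor
  · -- lower bound
    intro μ
    apply Stmt7Aux.lower_bound (T := ⌊(1 / 2 - ε / 2) * n⌋₊) ?_ μ
    have hSb := hn₁ n hn1
    set T := ⌊(1 / 2 - ε / 2) * n⌋₊ with hTdef
    set Sb : ℕ := ∑ j ∈ Finset.range (T + 1), (n + 1).choose j with hSbdef
    have hp0 : (0:ℝ) < 2 ^ n := by positivity
    have hSb2 : Sb ≤ 2 ^ n := by
      by_contra hcon
      push_neg at hcon
      have h2 : ((2:ℝ) ^ n) < (Sb : ℝ) := by exact_mod_cast hcon
      nlinarith
    have haR : ((2 ^ n - Sb : ℕ) : ℝ) = 2 ^ n - (Sb : ℝ) := by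
      push_cast [Nat.cast_sub hSb2]
      ring
    have hT1 : (1 / 2 - ε / 2) * n < (T : ℝ) + 1 := Nat.lt_floor_add_one _
    have hTnn : (0:ℝ) ≤ (1 / 2 - ε / 2) * n := by nlinarith
    -- the key real inequality
    have hreal : (1 / 2 - ε) * n * 2 ^ n ≤ ((2 ^ n - Sb : ℕ) : ℝ) * ((T : ℝ) + 1) := by
      rw [haR]
      have hf1 : (1 - ε) * 2 ^ n ≤ 2 ^ n - (Sb : ℝ) := by nlinarith
      have hf2 : (1 - ε) * 2 ^ n * ((1 / 2 - ε / 2) * n) ≤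
          (2 ^ n - (Sb : ℝ)) * ((T : ℝ) + 1) := by
        apply mul_le_mul hf1 (le_of_lt hT1) hTnn
        nlinarith
      nlinarith [sq_nonneg ε, mul_nonneg (mul_nonneg (sq_nonneg ε) (le_of_lt hn0)) (le_of_lt hp0)]
    -- cast to ℝ≥0∞
    have hc1 : ((T : ℝ≥0∞) + 1) = ENNReal.ofReal ((T : ℝ) + 1) := by
      rw [ENNReal.ofReal_add (by positivity) (by norm_num), ENNReal.ofReal_natCast,
        ENNReal.ofReal_one]
    rw [hc1, ← ENNReal.ofReal_natCast (2 ^ n), ← ENNReal.ofReal_natCast (2 ^ n - Sb),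
      ← ENNReal.ofReal_mul (by nlinarith), ← ENNReal.ofReal_mul (by positivity)]
    apply ENNReal.ofReal_le_ofReal
    calc (1 / 2 - ε) * n * ((2 ^ n : ℕ) : ℝ) = (1 / 2 - ε) * n * 2 ^ n := by push_cast; ring
      _ ≤ ((2 ^ n - Sb : ℕ) : ℝ) * ((T : ℝ) + 1) := hreal
  · -- upper bound
    exact Stmt7Aux.upper_bound hε hεn
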